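/- Let (X,Y) be uniformly distributed on the unit circle in ℝ². Then 90·∫∫ (F(x,y) − F₁(x)F₂(y))² dF₁(x) dF₂(y) = 1/16; i.e., Blum–Kiefer–Rosenblatt's R correlation measure of (X,Y) equals 1/16. -/

import Mathlib

set_option maxHeartbeats 1600000

open MeasureTheory

/-- The uniform distribution on the unit circle: pushforward of the normalized
Lebesgue measure on `[0, 2π)` under `θ ↦ (cos θ, sin θ)`. -/
noncomputable def circleUniform : Measure (ℝ × ℝ) :=
  Measure.map (fun θ : ℝ => (Real.cos θ, Real.sin θ))
    ((ENNReal.ofReal (2 * Real.pi))⁻¹ • volume.restrict (Set.Ico 0 (2 * Real.pi)))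

/-- Joint CDF of the circular uniform distribution. -/
noncomputable def circF (x y : ℝ) : ℝ :=
  (circleUniform (Set.Iic x ×ˢ Set.Iic y)).toReal

/-- First marginal CDF. -/
noncomputable def circF₁ (x : ℝ) : ℝ := ((circleUniform.map Prod.fst) (Set.Iic x)).toReal

/-- Second marginal CDF. -/
noncomputable def circF₂ (y : ℝ) : ℝ := ((circleUniform.map Prod.snd) (Set.Iic y)).toReal

open Real Set intervalIntegral

namespace BKR

noncomputable def nu : Measure ℝ :=
  (ENNReal.ofReal (2 * Real.pi))⁻¹ • volume.restrict (Set.Ico 0 (2 * Real.pi))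


lemma cos_le_iff_aux {x t : ℝ} (hx : -1 ≤ x) (hx1 : x ≤ 1) (ht0 : 0 ≤ t) (ht2 : t < 2 * π) :
    cos t ≤ x ↔ arccos x ≤ t ∧ t ≤ 2 * π - arccos x := by
  have hpi := pi_pos
  have ha0 := arccos_nonneg x
  have hapi := arccos_le_pi x
  have hca : cos (arccos x) = x := cos_arccos hx hx1
  constructor
  · intro h
    constructor
    · by_contra hc
      push_neg at hc
      rcases le_or_gt t π with htp | htp
      · have := Real.strictAntiOn_cos ⟨ht0, htp⟩ ⟨ha0, hapi⟩ hc
        rw [hca] at this; linarith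
      · linarith
    · by_contra hc
      push_neg at hc
      have h1 : 0 ≤ 2 * π - t := by linarith
      have h2 : 2 * π - t < arccos x := by linarith
      have hcos : cos (2 * π - t) = cos t := by
        rw [cos_sub]; simp [Real.cos_two_pi, Real.sin_two_pi]
      have := Real.strictAntiOn_cos ⟨h1, by linarith⟩ ⟨ha0, hapi⟩ h2
      rw [hca, hcos] at this; linarith
  · rintro ⟨h1, h2⟩
    rcases le_or_gt t π with htp | htp
    · have := Real.strictAntiOn_cos.antitoneOn ⟨ha0, hapi⟩ ⟨ht0, htp⟩ h1
      rw [hca] at this; linarith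
    · have hcos : cos (2 * π - t) = cos t := by
        rw [cos_sub]; simp [Real.cos_two_pi, Real.sin_two_pi]
      have := Real.strictAntiOn_cos.antitoneOn ⟨ha0, hapi⟩
        ⟨by linarith, by linarith⟩ (by linarith : arccos x ≤ 2 * π - t)
      rw [hca, hcos] at this; linarith

lemma sin_le_iff_aux {y t : ℝ} (hy : -1 ≤ y) (hy1 : y ≤ 1) (ht0 : 0 ≤ t) (ht2 : t < 2 * π) :
    sin t ≤ y ↔ t ≤ arcsin y ∨ (π - arcsin y ≤ t ∧ t ≤ 2 * π + arcsin y) := by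
  have hpi := pi_pos
  have hb0 := neg_pi_div_two_le_arcsin y
  have hb1 := arcsin_le_pi_div_two y
  have hsb : sin (arcsin y) = y := sin_arcsin hy hy1
  rcases le_or_gt t (π / 2) with h1 | h1
  · have key : sin t ≤ y ↔ t ≤ arcsin y := by
      constructor
      · intro h
        by_contra hc
        push_neg at hc
        have := Real.strictMonoOn_sin ⟨hb0, hb1⟩ ⟨by linarith, h1⟩ hc
        rw [hsb] at this; linarith
      · intro h
        have := Real.strictMonoOn_sin.monotoneOn ⟨by linarith, by linarith⟩ ⟨hb0, hb1⟩ h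
        rw [hsb] at this; linarith
    rw [key]
    constructor
    · exact Or.inl
    · rintro (h | ⟨h2, h3⟩)
      · exact h
      · linarith
  · rcases le_or_gt t (3 * π / 2) with h2 | h2
    · have hsin : sin (π - t) = sin t := Real.sin_pi_sub t
      have key : sin t ≤ y ↔ π - arcsin y ≤ t := by
        rw [← hsin]
        constructor
        · intro h
          by_contra hc
          push_neg at hc
          have := Real.strictMonoOn_sin ⟨hb0, hb1⟩ ⟨by linarith, by linarith⟩
            (by linarith : arcsin y < π - t)
          rw [hsb] at this; linarith
        · intro h
          have := Real.strictMonoOn_sin.monotoneOn ⟨by linarith, by linarith⟩ ⟨hb0, hb1⟩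
            (by linarith : π - t ≤ arcsin y)
          rw [hsb] at this; linarith
      rw [key]
      constructor
      · intro h; exact Or.inr ⟨h, by linarith⟩
      · rintro (h | ⟨h3, h4⟩)
        · linarith
        · exact h3
    · have hsin : sin (t - 2 * π) = sin t := by
        rw [sin_sub]; simp [Real.cos_two_pi, Real.sin_two_pi]
      have key : sin t ≤ y ↔ t ≤ 2 * π + arcsin y := by
        rw [← hsin]
        constructor
        · intro h
          by_contra hc
          push_neg at hc
          have := Real.strictMonoOn_sin ⟨hb0, hb1⟩ ⟨by linarith, by linarith⟩
            (by linarith : arcsin y < t - 2 * π)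
          rw [hsb] at this; linarith
        · intro h
          have := Real.strictMonoOn_sin.monotoneOn ⟨by linarith, by linarith⟩ ⟨hb0, hb1⟩
            (by linarith : t - 2 * π ≤ arcsin y)
          rw [hsb] at this; linarith
      rw [key]
      constructor
      · intro h; exact Or.inr ⟨by linarith, h⟩
      · rintro (h | ⟨h3, h4⟩)
        · linarith
        · exact h4






lemma vol_between {l u : ℝ} {S : Set ℝ} (h1 : Ico l u ⊆ S) (h2 : S ⊆ Icc l u) :
    volume S = ENNReal.ofReal (u - l) :=
  le_antisymm ((measure_mono h2).trans_eq Real.volume_Icc)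
    (Real.volume_Ico (a := l) (b := u) ▸ measure_mono h1)

lemma measurable_cs : Measurable (fun θ : ℝ => (Real.cos θ, Real.sin θ)) :=
  measurable_cos.prodMk measurable_sin

lemma map_fst : circleUniform.map Prod.fst = nu.map Real.cos := by
  rw [circleUniform, Measure.map_map measurable_fst measurable_cs]
  rfl

lemma map_snd : circleUniform.map Prod.snd = nu.map Real.sin := by
  rw [circleUniform, Measure.map_map measurable_snd measurable_cs]
  rfl

lemma nu_apply {S : Set ℝ} (hS : MeasurableSet S) :
    nu S = (ENNReal.ofReal (2 * π))⁻¹ * volume (S ∩ Ico 0 (2 * π)) := by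
  rw [nu, Measure.smul_apply, Measure.restrict_apply hS, smul_eq_mul]

lemma toReal_aux {r : ℝ} (hr : 0 ≤ r) :
    ((ENNReal.ofReal (2 * π))⁻¹ * ENNReal.ofReal r).toReal = r / (2 * π) := by
  rw [ENNReal.toReal_mul, ENNReal.toReal_inv, ENNReal.toReal_ofReal (by positivity),
    ENNReal.toReal_ofReal hr, div_eq_inv_mul]

lemma circF₁_eq {x : ℝ} (hx : -1 ≤ x) (hx1 : x ≤ 1) :
    circF₁ x = (2 * π - 2 * arccos x) / (2 * π) := by
  have hpi := pi_pos
  have ha0 := arccos_nonneg x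
  have hapi := arccos_le_pi x
  rw [circF₁, map_fst, Measure.map_apply measurable_cos measurableSet_Iic,
    nu_apply (measurable_cos measurableSet_Iic)]
  have hset : Real.cos ⁻¹' Iic x ∩ Ico 0 (2 * π) =
      Icc (arccos x) (2 * π - arccos x) ∩ Ico 0 (2 * π) := by
    ext t
    simp only [mem_inter_iff, mem_preimage, mem_Iic, mem_Ico, mem_Icc]
    constructor
    · rintro ⟨h, h0, h2⟩
      exact ⟨(cos_le_iff_aux hx hx1 h0 h2).mp h, h0, h2⟩
    · rintro ⟨h, h0, h2⟩
      exact ⟨(cos_le_iff_aux hx hx1 h0 h2).mpr h, h0, h2⟩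
  rw [hset]
  have hvol : volume (Icc (arccos x) (2 * π - arccos x) ∩ Ico 0 (2 * π)) =
      ENNReal.ofReal (2 * π - arccos x - arccos x) := by
    apply vol_between
    · intro t ht
      exact ⟨⟨ht.1, le_of_lt ht.2⟩, by constructor <;> [linarith [ht.1]; linarith [ht.2]]⟩
    · exact inter_subset_left
  rw [hvol, toReal_aux (by linarith)]
  ring_nf

lemma circF₂_eq {y : ℝ} (hy : -1 ≤ y) (hy1 : y ≤ 1) :
    circF₂ y = (π + 2 * arcsin y) / (2 * π) := by
  have hpi := pi_pos
  have hb0 := neg_pi_div_two_le_arcsin y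
  have hb1 := arcsin_le_pi_div_two y
  rw [circF₂, map_snd, Measure.map_apply measurable_sin measurableSet_Iic,
    nu_apply (measurable_sin measurableSet_Iic)]
  set b := arcsin y with hbdef
  have hset : Real.sin ⁻¹' Iic y ∩ Ico 0 (2 * π) =
      (Icc 0 b ∪ Icc (π - b) (2 * π + b)) ∩ Ico 0 (2 * π) := by
    ext t
    simp only [mem_inter_iff, mem_preimage, mem_Iic, mem_Ico, mem_Icc, mem_union]
    constructor
    · rintro ⟨h, h0, h2⟩
      rcases (sin_le_iff_aux hy hy1 h0 h2).mp h with h' | h'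
      · exact ⟨Or.inl ⟨h0, h'⟩, h0, h2⟩
      · exact ⟨Or.inr h', h0, h2⟩
    · rintro ⟨h, h0, h2⟩
      refine ⟨(sin_le_iff_aux hy hy1 h0 h2).mpr ?_, h0, h2⟩
      rcases h with h' | h'
      · exact Or.inl h'.2
      · exact Or.inr h'
  rw [hset, union_inter_distrib_right]
  have hdisj : volume ((Icc 0 b ∩ Ico 0 (2 * π)) ∩ (Icc (π - b) (2 * π + b) ∩ Ico 0 (2 * π))) = 0 := by
    apply measure_mono_null (t := Icc (π - b) b)
    · intro t ht
      exact ⟨ht.2.1.1, ht.1.1.2⟩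
    · rw [Real.volume_Icc, ENNReal.ofReal_eq_zero]
      linarith
  rw [measure_union₀ ((measurableSet_Icc.inter measurableSet_Ico).nullMeasurableSet) hdisj]
  rcases le_or_gt 0 b with hb | hb
  · have v1 : volume (Icc 0 b ∩ Ico 0 (2 * π)) = ENNReal.ofReal (b - 0) := by
      apply vol_between
      · intro t ht
        exact ⟨⟨ht.1, le_of_lt ht.2⟩, ht.1, by linarith [ht.2]⟩
      · exact inter_subset_left
    have v2 : volume (Icc (π - b) (2 * π + b) ∩ Ico 0 (2 * π)) =
        ENNReal.ofReal (2 * π - (π - b)) := by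
      apply vol_between
      · intro t ht
        exact ⟨⟨ht.1, by linarith [ht.2]⟩, by linarith [ht.1], ht.2⟩
      · intro t ht
        exact ⟨ht.1.1, le_of_lt ht.2.2⟩
    rw [v1, v2, ← ENNReal.ofReal_add (by linarith) (by linarith), toReal_aux (by linarith)]
    ring_nf
  · have v1 : Icc (0:ℝ) b ∩ Ico 0 (2 * π) = ∅ := by
      rw [Icc_eq_empty (by linarith), empty_inter]
    have v2 : volume (Icc (π - b) (2 * π + b) ∩ Ico 0 (2 * π)) =
        ENNReal.ofReal (2 * π + b - (π - b)) := by
      apply vol_between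
      · intro t ht
        exact ⟨⟨ht.1, le_of_lt ht.2⟩, by linarith [ht.1], by linarith [ht.2]⟩
      · exact inter_subset_left
    rw [v1, v2, measure_empty, zero_add, toReal_aux (by linarith)]
    ring_nf





lemma toReal_aux2 (p q : ℝ) :
    ((ENNReal.ofReal (2 * π))⁻¹ * (ENNReal.ofReal p + ENNReal.ofReal q)).toReal
      = (max p 0 + max q 0) / (2 * π) := by
  rw [ENNReal.toReal_mul, ENNReal.toReal_inv, ENNReal.toReal_ofReal (by positivity),
    ENNReal.toReal_add ENNReal.ofReal_ne_top ENNReal.ofReal_ne_top,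
    ENNReal.toReal_ofReal', ENNReal.toReal_ofReal', div_eq_inv_mul]

lemma circF_eq {x y : ℝ} (hx : -1 ≤ x) (hx1 : x ≤ 1) (hy : -1 ≤ y) (hy1 : y ≤ 1) :
    circF x y = (max (arcsin y - arccos x) 0 +
      max (min (2 * π - arccos x) (2 * π + arcsin y) - max (arccos x) (π - arcsin y)) 0)
      / (2 * π) := by
  have hpi := pi_pos
  have ha0 := arccos_nonneg x
  have hapi := arccos_le_pi x
  have hb0 := neg_pi_div_two_le_arcsin y
  have hb1 := arcsin_le_pi_div_two y
  set a := arccos x with hadef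
  set b := arcsin y with hbdef
  have hmS : MeasurableSet ((fun θ : ℝ => (Real.cos θ, Real.sin θ)) ⁻¹' (Iic x ×ˢ Iic y)) :=
    measurable_cs (measurableSet_Iic.prod measurableSet_Iic)
  rw [circF, circleUniform, Measure.map_apply measurable_cs
    (measurableSet_Iic.prod measurableSet_Iic)]
  have : ((ENNReal.ofReal (2 * Real.pi))⁻¹ • volume.restrict (Set.Ico 0 (2 * Real.pi)))
      ((fun θ : ℝ => (Real.cos θ, Real.sin θ)) ⁻¹' (Iic x ×ˢ Iic y))
      = (ENNReal.ofReal (2 * π))⁻¹ *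
        volume (((fun θ : ℝ => (Real.cos θ, Real.sin θ)) ⁻¹' (Iic x ×ˢ Iic y)) ∩ Ico 0 (2 * π)) := by
    rw [Measure.smul_apply, Measure.restrict_apply hmS, smul_eq_mul]
  rw [this]
  set L := max a (π - b) with hLdef
  set U := min (2 * π - a) (2 * π + b) with hUdef
  have hL : π - b ≤ L := le_max_right _ _
  have hU1 : U ≤ 2 * π - a := min_le_left _ _
  have hU2 : U ≤ 2 * π + b := min_le_right _ _
  have hset : ((fun θ : ℝ => (Real.cos θ, Real.sin θ)) ⁻¹' (Iic x ×ˢ Iic y)) ∩ Ico 0 (2 * π)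
      = (Icc a b ∪ Icc L U) ∩ Ico 0 (2 * π) := by
    ext t
    simp only [mem_inter_iff, mem_preimage, mem_prod, mem_Iic, mem_Ico, mem_Icc, mem_union]
    constructor
    · rintro ⟨⟨hc, hs⟩, h0, h2⟩
      obtain ⟨hc1, hc2⟩ := (cos_le_iff_aux hx hx1 h0 h2).mp hc
      refine ⟨?_, h0, h2⟩
      rcases (sin_le_iff_aux hy hy1 h0 h2).mp hs with h' | ⟨h3, h4⟩
      · exact Or.inl ⟨hc1, h'⟩
      · exact Or.inr ⟨max_le hc1 h3, le_min hc2 h4⟩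
    · rintro ⟨h, h0, h2⟩
      refine ⟨⟨?_, ?_⟩, h0, h2⟩
      · apply (cos_le_iff_aux hx hx1 h0 h2).mpr
        rcases h with ⟨h1, h3⟩ | ⟨h1, h3⟩
        · exact ⟨h1, by linarith⟩
        · exact ⟨le_trans (le_max_left _ _) h1, le_trans h3 hU1⟩
      · apply (sin_le_iff_aux hy hy1 h0 h2).mpr
        rcases h with ⟨h1, h3⟩ | ⟨h1, h3⟩
        · exact Or.inl h3
        · exact Or.inr ⟨le_trans hL h1, le_trans h3 hU2⟩
  rw [hset, union_inter_distrib_right]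
  have hdisj : volume ((Icc a b ∩ Ico 0 (2 * π)) ∩ (Icc L U ∩ Ico 0 (2 * π))) = 0 := by
    apply measure_mono_null (t := Icc L b)
    · intro t ht
      exact ⟨ht.2.1.1, ht.1.1.2⟩
    · rw [Real.volume_Icc, ENNReal.ofReal_eq_zero]
      linarith
  rw [measure_union₀ ((measurableSet_Icc.inter measurableSet_Ico).nullMeasurableSet) hdisj]
  have v1 : volume (Icc a b ∩ Ico 0 (2 * π)) = ENNReal.ofReal (b - a) := by
    apply vol_between
    · intro t ht
      exact ⟨⟨ht.1, le_of_lt ht.2⟩, by linarith [ht.1], by linarith [ht.2]⟩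
    · exact inter_subset_left
  have v2 : volume (Icc L U ∩ Ico 0 (2 * π)) = ENNReal.ofReal (U - L) := by
    apply vol_between
    · intro t ht
      exact ⟨⟨ht.1, le_of_lt ht.2⟩, by linarith [ht.1], by linarith [ht.2]⟩
    · exact inter_subset_left
  rw [v1, v2, toReal_aux2]




lemma integral_linear_sq (α β l r : ℝ) :
    ∫ b in l..r, (α * b + β) ^ 2 =
      (α^2*r^3/3 + α*β*r^2 + β^2*r) - (α^2*l^3/3 + α*β*l^2 + β^2*l) := by
  have h : ∀ u ∈ uIcc l r,
      HasDerivAt (fun b => α^2*b^3/3 + α*β*b^2 + β^2*b) ((α * u + β) ^ 2) u := by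
    intro u _
    have h1 : HasDerivAt (fun b : ℝ => α^2*b^3/3 + α*β*b^2 + β^2*b)
        ((α^2 * (↑3 * u^2)) / 3 + α*β*(↑2 * u^1) + β^2 * 1) u := by
      exact ((((hasDerivAt_pow 3 u).const_mul (α^2)).div_const 3).add
        ((hasDerivAt_pow 2 u).const_mul (α*β))).add ((hasDerivAt_id' u).const_mul (β^2))
    convert h1 using 1
    push_cast
    ring
  rw [intervalIntegral.integral_eq_sub_of_hasDerivAt h
    ((((continuous_const.mul continuous_id').add continuous_const).pow 2).intervalIntegrable l r)]

lemma integral_poly4 (c0 c1 c2 c3 c4 l r : ℝ) :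
    ∫ a in l..r, (c4*a^4 + c3*a^3 + c2*a^2 + c1*a + c0) =
      (c4*r^5/5 + c3*r^4/4 + c2*r^3/3 + c1*r^2/2 + c0*r)
        - (c4*l^5/5 + c3*l^4/4 + c2*l^3/3 + c1*l^2/2 + c0*l) := by
  have h : ∀ u ∈ uIcc l r,
      HasDerivAt (fun a => c4*a^5/5 + c3*a^4/4 + c2*a^3/3 + c1*a^2/2 + c0*a)
        (c4*u^4 + c3*u^3 + c2*u^2 + c1*u + c0) u := by
    intro u _
    have h1 : HasDerivAt (fun a : ℝ => c4*a^5/5 + c3*a^4/4 + c2*a^3/3 + c1*a^2/2 + c0*a)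
        ((c4 * (↑5 * u^4))/5 + (c3 * (↑4 * u^3))/4 + (c2 * (↑3 * u^2))/3
          + (c1 * (↑2 * u^1))/2 + c0 * 1) u := by
      exact (((((hasDerivAt_pow 5 u).const_mul c4).div_const 5).add
        (((hasDerivAt_pow 4 u).const_mul c3).div_const 4)).add
        (((hasDerivAt_pow 3 u).const_mul c2).div_const 3)).add
        (((hasDerivAt_pow 2 u).const_mul c1).div_const 2) |>.add
        ((hasDerivAt_id' u).const_mul c0)
    convert h1 using 1
    push_cast
    ring
  rw [intervalIntegral.integral_eq_sub_of_hasDerivAt h ((by continuity : Continuous fun a : ℝ =>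
    c4*a^4 + c3*a^3 + c2*a^2 + c1*a + c0).intervalIntegrable l r)]

lemma fold_sin (F : ℝ → ℝ) (hF : Continuous F) :
    ∫ φ in (0:ℝ)..(2 * π), F (arcsin (sin φ)) = 2 * ∫ b in (-(π/2))..(π/2), F b := by
  have hpi := pi_pos
  have hc : Continuous fun φ => F (arcsin (sin φ)) :=
    hF.comp (Real.continuous_arcsin.comp Real.continuous_sin)
  have k1 : ∫ φ in (0:ℝ)..(π/2), F (arcsin (sin φ)) = ∫ b in (0:ℝ)..(π/2), F b := by
    apply integral_congr
    intro φ hφ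
    rw [uIcc_of_le (by linarith)] at hφ
    beta_reduce
    rw [arcsin_sin (by linarith [hφ.1]) hφ.2]
  have k2 : ∫ φ in (π/2:ℝ)..(3*π/2), F (arcsin (sin φ)) = ∫ b in (-(π/2))..(π/2), F b := by
    have e1 : ∫ φ in (π/2:ℝ)..(3*π/2), F (arcsin (sin φ))
        = ∫ φ in (π/2:ℝ)..(3*π/2), F (π - φ) := by
      apply integral_congr
      intro φ hφ
      rw [uIcc_of_le (by linarith)] at hφ
      beta_reduce
      rw [← Real.sin_pi_sub, arcsin_sin (by linarith [hφ.2]) (by linarith [hφ.1])]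
    rw [e1, intervalIntegral.integral_comp_sub_left F π]
    congr 1 <;> ring
  have k3 : ∫ φ in (3*π/2:ℝ)..(2*π), F (arcsin (sin φ)) = ∫ b in (-(π/2))..(0:ℝ), F b := by
    have e1 : ∫ φ in (3*π/2:ℝ)..(2*π), F (arcsin (sin φ))
        = ∫ φ in (3*π/2:ℝ)..(2*π), F (φ - 2*π) := by
      apply integral_congr
      intro φ hφ
      rw [uIcc_of_le (by linarith)] at hφ
      have hs : sin (φ - 2*π) = sin φ := by
        rw [sin_sub]; simp [Real.cos_two_pi, Real.sin_two_pi]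
      beta_reduce
      rw [← hs, arcsin_sin (by linarith [hφ.1]) (by linarith [hφ.2])]
    rw [e1, intervalIntegral.integral_comp_sub_right F (2*π)]
    congr 1 <;> ring
  have s1 : ∫ φ in (π/2:ℝ)..(2*π), F (arcsin (sin φ))
      = (∫ φ in (π/2:ℝ)..(3*π/2), F (arcsin (sin φ)))
        + ∫ φ in (3*π/2:ℝ)..(2*π), F (arcsin (sin φ)) :=
    (integral_add_adjacent_intervals (hc.intervalIntegrable _ _) (hc.intervalIntegrable _ _)).symm
  have s0 : ∫ φ in (0:ℝ)..(2*π), F (arcsin (sin φ))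
      = (∫ φ in (0:ℝ)..(π/2), F (arcsin (sin φ)))
        + ∫ φ in (π/2:ℝ)..(2*π), F (arcsin (sin φ)) :=
    (integral_add_adjacent_intervals (hc.intervalIntegrable _ _) (hc.intervalIntegrable _ _)).symm
  have s2 : (∫ b in (-(π/2))..(0:ℝ), F b) + ∫ b in (0:ℝ)..(π/2), F b
      = ∫ b in (-(π/2))..(π/2), F b :=
    integral_add_adjacent_intervals (hF.intervalIntegrable _ _) (hF.intervalIntegrable _ _)
  rw [s0, s1, k1, k2, k3]
  linarith

lemma fold_cos (F : ℝ → ℝ) (hF : Continuous F) :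
    ∫ θ in (0:ℝ)..(2 * π), F (arccos (cos θ)) = 2 * ∫ a in (0:ℝ)..π, F a := by
  have hpi := pi_pos
  have hc : Continuous fun θ => F (arccos (cos θ)) :=
    hF.comp (Real.continuous_arccos.comp Real.continuous_cos)
  have k1 : ∫ θ in (0:ℝ)..π, F (arccos (cos θ)) = ∫ a in (0:ℝ)..π, F a := by
    apply integral_congr
    intro θ hθ
    rw [uIcc_of_le (by linarith)] at hθ
    beta_reduce
    rw [arccos_cos hθ.1 hθ.2]
  have k2 : ∫ θ in (π:ℝ)..(2*π), F (arccos (cos θ)) = ∫ a in (0:ℝ)..π, F a := by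
    have e1 : ∫ θ in (π:ℝ)..(2*π), F (arccos (cos θ))
        = ∫ θ in (π:ℝ)..(2*π), F (2*π - θ) := by
      apply integral_congr
      intro θ hθ
      rw [uIcc_of_le (by linarith)] at hθ
      have hcc : cos (2*π - θ) = cos θ := by
        rw [cos_sub]; simp [Real.cos_two_pi, Real.sin_two_pi]
      beta_reduce
      rw [← hcc, arccos_cos (by linarith [hθ.2]) (by linarith [hθ.1])]
    rw [e1, intervalIntegral.integral_comp_sub_left F (2*π)]
    congr 1 <;> ring
  have s0 : ∫ θ in (0:ℝ)..(2*π), F (arccos (cos θ))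
      = (∫ θ in (0:ℝ)..π, F (arccos (cos θ))) + ∫ θ in (π:ℝ)..(2*π), F (arccos (cos θ)) :=
    (integral_add_adjacent_intervals (hc.intervalIntegrable _ _) (hc.intervalIntegrable _ _)).symm
  rw [s0, k1, k2]
  ring

noncomputable def Qf (a b : ℝ) : ℝ :=
  ((max (b - a) 0 + max (min (2*π - a) (2*π + b) - max a (π - b)) 0) / (2*π)
    - (2*π - 2*a)/(2*π) * ((π + 2*b)/(2*π)))^2

noncomputable def Ef (a : ℝ) : ℝ :=
  if a ≤ π/2 then a^2*(π-2*a)^2/(12*π^3) else (π-a)^2*(π-2*a)^2/(12*π^3)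

lemma Qf_cont (a : ℝ) : Continuous (Qf a) := by
  unfold Qf
  apply Continuous.pow
  apply Continuous.sub
  · apply Continuous.div_const
    exact ((continuous_id'.sub continuous_const).max continuous_const).add
      ((((continuous_const.min (continuous_const.add continuous_id')).sub
        (continuous_const.max (continuous_const.sub continuous_id'))).max continuous_const))
  · exact continuous_const.mul ((continuous_const.add (continuous_const.mul continuous_id')).div_const _)

lemma inner_eq {a : ℝ} (ha0 : 0 ≤ a) (ha1 : a ≤ π) :
    ∫ b in (-(π/2))..(π/2), Qf a b = Ef a := by
  have hpi := pi_pos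
  have hpi' := pi_ne_zero
  have hQi : ∀ l r : ℝ, IntervalIntegrable (Qf a) volume l r :=
    fun l r => (Qf_cont a).intervalIntegrable l r
  rcases le_or_gt a (π/2) with hc | hc
  · have s1 : (∫ b in (-(π/2))..(-a), Qf a b) + (∫ b in (-a)..a, Qf a b)
        = ∫ b in (-(π/2))..a, Qf a b := integral_add_adjacent_intervals (hQi _ _) (hQi _ _)
    have s2 : (∫ b in (-(π/2))..a, Qf a b) + (∫ b in a..(π/2), Qf a b)
        = ∫ b in (-(π/2))..(π/2), Qf a b := integral_add_adjacent_intervals (hQi _ _) (hQi _ _)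
    have p1 : ∫ b in (-(π/2))..(-a), Qf a b
        = ∫ b in (-(π/2))..(-a), ((a/π^2) * b + a/(2*π))^2 := by
      apply integral_congr
      intro b hb
      rw [uIcc_of_le (by linarith)] at hb
      obtain ⟨hb1, hb2⟩ := hb
      simp only [Qf]
      rw [max_eq_right (by linarith : b - a ≤ 0),
        min_eq_right (by linarith : 2*π + b ≤ 2*π - a),
        max_eq_right (by linarith : a ≤ π - b),
        max_eq_left (by linarith : (0:ℝ) ≤ 2*π + b - (π - b))]
      field_simp
      ring
    have p2 : ∫ b in (-a)..a, Qf a b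
        = ∫ b in (-a)..a, ((2*a-π)/(2*π^2) * b + 0)^2 := by
      apply integral_congr
      intro b hb
      rw [uIcc_of_le (by linarith)] at hb
      obtain ⟨hb1, hb2⟩ := hb
      simp only [Qf]
      rw [max_eq_right (by linarith : b - a ≤ 0),
        min_eq_left (by linarith : 2*π - a ≤ 2*π + b),
        max_eq_right (by linarith : a ≤ π - b),
        max_eq_left (by linarith : (0:ℝ) ≤ 2*π - a - (π - b))]
      field_simp
      ring
    have p3 : ∫ b in a..(π/2), Qf a b
        = ∫ b in a..(π/2), ((a/π^2) * b + (-(a/(2*π))))^2 := by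
      apply integral_congr
      intro b hb
      rw [uIcc_of_le (by linarith)] at hb
      obtain ⟨hb1, hb2⟩ := hb
      simp only [Qf]
      rw [max_eq_left (by linarith : (0:ℝ) ≤ b - a),
        min_eq_left (by linarith : 2*π - a ≤ 2*π + b),
        max_eq_right (by linarith : a ≤ π - b),
        max_eq_left (by linarith : (0:ℝ) ≤ 2*π - a - (π - b))]
      field_simp
      ring
    rw [← s2, ← s1, p1, p2, p3, integral_linear_sq, integral_linear_sq, integral_linear_sq,
      Ef, if_pos hc]
    field_simp
    ring
  · have hb1 : -(π/2) ≤ a - π := by linarith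
    have hb2 : a - π ≤ π - a := by linarith
    have hb3 : π - a ≤ π/2 := by linarith
    have s1 : (∫ b in (-(π/2))..(a-π), Qf a b) + (∫ b in (a-π)..(π-a), Qf a b)
        = ∫ b in (-(π/2))..(π-a), Qf a b := integral_add_adjacent_intervals (hQi _ _) (hQi _ _)
    have s2 : (∫ b in (-(π/2))..(π-a), Qf a b) + (∫ b in (π-a)..(π/2), Qf a b)
        = ∫ b in (-(π/2))..(π/2), Qf a b := integral_add_adjacent_intervals (hQi _ _) (hQi _ _)
    have p1 : ∫ b in (-(π/2))..(a-π), Qf a b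
        = ∫ b in (-(π/2))..(a-π), (((π-a)/π^2) * b + (π-a)/(2*π))^2 := by
      apply integral_congr
      intro b hb
      rw [uIcc_of_le hb1] at hb
      obtain ⟨hb1', hb2'⟩ := hb
      simp only [Qf]
      rw [max_eq_right (by linarith : b - a ≤ 0),
        min_eq_left (by linarith : 2*π - a ≤ 2*π + b),
        max_eq_right (by linarith : a ≤ π - b),
        max_eq_right (by linarith : 2*π - a - (π - b) ≤ 0)]
      field_simp
      ring
    have p2 : ∫ b in (a-π)..(π-a), Qf a b
        = ∫ b in (a-π)..(π-a), ((2*a-π)/(2*π^2) * b + 0)^2 := by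
      apply integral_congr
      intro b hb
      rw [uIcc_of_le hb2] at hb
      obtain ⟨hb1', hb2'⟩ := hb
      simp only [Qf]
      rw [max_eq_right (by linarith : b - a ≤ 0),
        min_eq_left (by linarith : 2*π - a ≤ 2*π + b),
        max_eq_right (by linarith : a ≤ π - b),
        max_eq_left (by linarith : (0:ℝ) ≤ 2*π - a - (π - b))]
      field_simp
      ring
    have p3 : ∫ b in (π-a)..(π/2), Qf a b
        = ∫ b in (π-a)..(π/2), ((-((π-a)/π^2)) * b + (π-a)/(2*π))^2 := by
      apply integral_congr
      intro b hb
      rw [uIcc_of_le hb3] at hb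
      obtain ⟨hb1', hb2'⟩ := hb
      simp only [Qf]
      rw [max_eq_right (by linarith : b - a ≤ 0),
        min_eq_left (by linarith : 2*π - a ≤ 2*π + b),
        max_eq_left (by linarith : π - b ≤ a),
        max_eq_left (by linarith : (0:ℝ) ≤ 2*π - a - a)]
      field_simp
      ring
    rw [← s2, ← s1, p1, p2, p3, integral_linear_sq, integral_linear_sq, integral_linear_sq,
      Ef, if_neg (not_le.mpr hc)]
    field_simp
    ring

lemma Ef_cont : Continuous Ef := by
  unfold Ef
  apply Continuous.if_le (by continuity) (by continuity) continuous_id continuous_const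
  intro x hx
  simp only [id] at hx
  rw [hx]
  ring_nf

lemma Ef_integrable : ∀ l r : ℝ, IntervalIntegrable Ef volume l r :=
  fun l r => Ef_cont.intervalIntegrable l r

lemma outer_val : ∫ a in (0:ℝ)..π, Ef a = π^2/1440 := by
  have hpi := pi_pos
  have hpi' := pi_ne_zero
  have s : (∫ a in (0:ℝ)..(π/2), Ef a) + (∫ a in (π/2)..π, Ef a) = ∫ a in (0:ℝ)..π, Ef a :=
    integral_add_adjacent_intervals (Ef_integrable _ _) (Ef_integrable _ _)
  have p1 : ∫ a in (0:ℝ)..(π/2), Ef a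
      = ∫ a in (0:ℝ)..(π/2), ((1/(3*π^3))*a^4 + (-(1/(3*π^2)))*a^3 + (1/(12*π))*a^2
          + 0*a + 0) := by
    apply integral_congr
    intro a ha
    rw [uIcc_of_le (by linarith)] at ha
    rw [Ef, if_pos ha.2]
    field_simp
    ring
  have p2 : ∫ a in (π/2:ℝ)..π, Ef a
      = ∫ a in (π/2:ℝ)..π, ((1/(3*π^3))*a^4 + (-(1/π^2))*a^3 + (13/(12*π))*a^2
          + (-(1/2))*a + π/12) := by
    apply integral_congr
    intro a ha
    rw [uIcc_of_le (by linarith)] at ha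
    rw [Ef]
    rcases eq_or_lt_of_le ha.1 with he | hlt
    · rw [if_pos he.symm.le, ← he]
      field_simp
      ring
    · rw [if_neg (not_le.mpr hlt)]
      field_simp
      ring
  rw [← s, p1, p2, integral_poly4, integral_poly4]
  field_simp
  ring

lemma double_val : ∫ θ in (0:ℝ)..(2*π), (∫ φ in (0:ℝ)..(2*π), Qf (arccos (cos θ)) (arcsin (sin φ)))
    = π^2/360 := by
  have hinner : ∀ θ : ℝ, (∫ φ in (0:ℝ)..(2*π), Qf (arccos (cos θ)) (arcsin (sin φ)))
      = 2 * Ef (arccos (cos θ)) := by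
    intro θ
    rw [fold_sin _ (Qf_cont _), inner_eq (arccos_nonneg _) (arccos_le_pi _)]
  simp only [hinner]
  have h2 : ∫ θ in (0:ℝ)..(2*π), 2 * Ef (arccos (cos θ)) = 2 * ∫ a in (0:ℝ)..π, 2 * Ef a :=
    fold_cos (fun a => 2 * Ef a) (continuous_const.mul Ef_cont)
  rw [h2, intervalIntegral.integral_const_mul, outer_val]
  ring


instance : IsFiniteMeasure nu := by
  constructor
  rw [nu, Measure.smul_apply, Measure.restrict_apply_univ, Real.volume_Ico, smul_eq_mul]
  exact ENNReal.mul_lt_top (ENNReal.inv_lt_top.mpr (by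
    rw [ENNReal.ofReal_pos]; linarith [pi_pos])) ENNReal.ofReal_lt_top

lemma nu_prod : nu.prod nu = ((ENNReal.ofReal (2*π))⁻¹ * (ENNReal.ofReal (2*π))⁻¹) •
    ((volume.restrict (Ico 0 (2*π))).prod (volume.restrict (Ico 0 (2*π)))) := by
  apply Measure.prod_eq
  intro s t hs ht
  rw [Measure.smul_apply, Measure.prod_prod, nu]
  simp only [Measure.smul_apply, smul_eq_mul]
  ring

lemma map_cos_compl : (nu.map Real.cos) (Icc (-1:ℝ) 1)ᶜ = 0 := by
  rw [Measure.map_apply measurable_cos measurableSet_Icc.compl]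
  have h : Real.cos ⁻¹' (Icc (-1:ℝ) 1)ᶜ = ∅ := by
    ext t
    simp [Real.neg_one_le_cos, Real.cos_le_one]
  rw [h, measure_empty]

lemma map_sin_compl : (nu.map Real.sin) (Icc (-1:ℝ) 1)ᶜ = 0 := by
  rw [Measure.map_apply measurable_sin measurableSet_Icc.compl]
  have h : Real.sin ⁻¹' (Icc (-1:ℝ) 1)ᶜ = ∅ := by
    ext t
    simp [Real.neg_one_le_sin, Real.sin_le_one]
  rw [h, measure_empty]

lemma ae_box : ∀ᵐ p : ℝ × ℝ ∂((nu.map Real.cos).prod (nu.map Real.sin)),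
    p.1 ∈ Icc (-1:ℝ) 1 ∧ p.2 ∈ Icc (-1:ℝ) 1 := by
  apply Filter.Eventually.and
  · rw [MeasureTheory.ae_iff]
    have h : {p : ℝ × ℝ | ¬ p.1 ∈ Icc (-1:ℝ) 1} = (Icc (-1:ℝ) 1)ᶜ ×ˢ (univ : Set ℝ) := by
      ext p; simp
    rw [h, Measure.prod_prod, map_cos_compl, zero_mul]
  · rw [MeasureTheory.ae_iff]
    have h : {p : ℝ × ℝ | ¬ p.2 ∈ Icc (-1:ℝ) 1} = (univ : Set ℝ) ×ˢ (Icc (-1:ℝ) 1)ᶜ := by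
      ext p; simp
    rw [h, Measure.prod_prod, map_sin_compl, mul_zero]

lemma Qf_cont2 : Continuous (fun p : ℝ × ℝ => Qf p.1 p.2) := by
  unfold Qf
  apply Continuous.pow
  apply Continuous.sub
  · apply Continuous.div_const
    exact ((continuous_snd.sub continuous_fst).max continuous_const).add
      ((((continuous_const.sub continuous_fst).min (continuous_const.add continuous_snd)).sub
        (continuous_fst.max (continuous_const.sub continuous_snd))).max continuous_const)
  · exact ((continuous_const.sub (continuous_const.mul continuous_fst)).div_const _).mul
      ((continuous_const.add (continuous_const.mul continuous_snd)).div_const _)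

end BKR

open BKR

theorem BKR_circle :
    90 * ∫ p : ℝ × ℝ, (circF p.1 p.2 - circF₁ p.1 * circF₂ p.2) ^ 2
        ∂((circleUniform.map Prod.fst).prod (circleUniform.map Prod.snd))
      = 1 / 16 := by
  have hpi := pi_pos
  rw [map_fst, map_snd]
  have hHcont : Continuous (fun p : ℝ × ℝ => Qf (arccos p.1) (arcsin p.2)) :=
    Qf_cont2.comp ((continuous_arccos.comp continuous_fst).prodMk
      (continuous_arcsin.comp continuous_snd))
  have step1 : ∫ p : ℝ × ℝ, (circF p.1 p.2 - circF₁ p.1 * circF₂ p.2) ^ 2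
        ∂((nu.map Real.cos).prod (nu.map Real.sin))
      = ∫ p : ℝ × ℝ, Qf (arccos p.1) (arcsin p.2)
        ∂((nu.map Real.cos).prod (nu.map Real.sin)) := by
    apply MeasureTheory.integral_congr_ae
    filter_upwards [ae_box] with p hp
    obtain ⟨⟨h1, h2⟩, h3, h4⟩ := hp
    rw [circF_eq h1 h2 h3 h4, circF₁_eq h1 h2, circF₂_eq h3 h4, Qf]
  rw [step1, Measure.map_prod_map _ _ measurable_cos measurable_sin,
    integral_map (measurable_cos.prodMap measurable_sin).aemeasurable
      hHcont.aestronglyMeasurable]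
  simp only [Prod.map_fst, Prod.map_snd]
  rw [nu_prod, MeasureTheory.integral_smul_measure]
  set ρ := volume.restrict (Ico 0 (2*π)) with hρ
  have hWcont : Continuous (fun x : ℝ × ℝ => Qf (arccos (cos x.1)) (arcsin (sin x.2))) :=
    Qf_cont2.comp (((continuous_arccos.comp continuous_cos).comp continuous_fst).prodMk
      ((continuous_arcsin.comp continuous_sin).comp continuous_snd))
  have hint : Integrable (fun x : ℝ × ℝ => Qf (arccos (cos x.1)) (arcsin (sin x.2))) (ρ.prod ρ) := by
    rw [hρ, Measure.prod_restrict]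
    exact IntegrableOn.mono_set
      (ContinuousOn.integrableOn_compact (isCompact_Icc.prod isCompact_Icc) hWcont.continuousOn)
      (Set.prod_mono Ico_subset_Icc_self Ico_subset_Icc_self)
  rw [MeasureTheory.integral_prod _ hint]
  have conv : ∀ g : ℝ → ℝ, (∫ t, g t ∂ρ) = ∫ t in (0:ℝ)..(2*π), g t := by
    intro g
    rw [intervalIntegral.integral_of_le (by linarith), MeasureTheory.integral_Ioc_eq_integral_Ioo,
      hρ]
    exact MeasureTheory.integral_Ico_eq_integral_Ioo
  simp only [conv]
  rw [double_val]
  rw [ENNReal.toReal_mul, ENNReal.toReal_inv, ENNReal.toReal_ofReal (by linarith), smul_eq_mul]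
  field_simp
  ring
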